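/- Soundness of the k-cycle rule: let k be an odd positive integer, X a finite nonempty set with probability distribution P : X → (0,1] summing to 1, and x_0, x_1, ..., x_k functions on X (with indices mod k+1). Suppose that for every even i with 0 ≤ i ≤ k−1 the functional dependency =(x_i, x_{i+1}) holds, and for every odd j with 1 ≤ j ≤ k the marginal distribution equivalence x_j ≈* x_{j+1 mod (k+1)} holds. Then for every even i with 0 ≤ i ≤ k−1, both the reverse functional dependency =(x_{i+1}, x_i) and the marginal distribution equivalence x_i ≈* x_{i+1} hold. -/

import Mathlib

/-- The multiset of marginal probabilities of `f` over its image. -/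
noncomputable def margMultiset {X A : Type*} [Fintype X] [DecidableEq A]
    (P : X → ℝ) (f : X → A) : Multiset ℝ :=
  (Finset.univ.image f).val.map
    (fun a => ∑ s ∈ Finset.univ.filter (fun s => f s = a), P s)

/-- Functional dependency `=(f,g)`. -/
def FD {X A B : Type*} (f : X → A) (g : X → B) : Prop :=
  ∀ s s', f s = f s' → g s = g s'

section Aux
variable {X A B : Type*} [Fintype X] [Nonempty X] [DecidableEq A] [DecidableEq B]

/-- pick a preimage of `a` under `f` (or arbitrary). -/
noncomputable def pick (f : X → A) (a : A) : X :=
  if h : ∃ s, f s = a then h.choose else Classical.arbitrary X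

lemma pick_spec (f : X → A) (s : X) : f (pick f (f s)) = f s := by
  unfold pick
  rw [dif_pos ⟨s, rfl⟩]
  exact (⟨s, rfl⟩ : ∃ t, f t = f s).choose_spec

lemma phi_spec (f : X → A) (g : X → B) (h : FD f g) (s : X) :
    g (pick f (f s)) = g s :=
  h _ _ (pick_spec f s)

lemma FD_card_le (f : X → A) (g : X → B) (h : FD f g) :
    (Finset.univ.image g).card ≤ (Finset.univ.image f).card := by
  apply Finset.card_le_card_of_surjOn (fun a => g (pick f a))
  intro b hb
  simp only [Finset.coe_image, Set.mem_image, Finset.mem_coe, Finset.mem_univ,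
    true_and, Set.mem_setOf_eq, Finset.coe_univ, Set.image_univ, Set.mem_range] at hb ⊢
  obtain ⟨s, rfl⟩ := hb
  exact ⟨f s, ⟨s, rfl⟩, phi_spec f g h s⟩

lemma margMultiset_card (P : X → ℝ) (f : X → A) :
    Multiset.card (margMultiset P f) = (Finset.univ.image f).card := by
  unfold margMultiset
  rw [Multiset.card_map]
  rfl

lemma key (P : X → ℝ) (f : X → A) (g : X → B) (hfd : FD f g)
    (hcard : (Finset.univ.image f).card = (Finset.univ.image g).card) :
    FD g f ∧ margMultiset P f = margMultiset P g := by
  set φ : A → B := fun a => g (pick f a) with hφ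
  have himg : (Finset.univ.image f).image φ = Finset.univ.image g := by
    apply Finset.Subset.antisymm
    · intro b hb
      simp only [Finset.mem_image, Finset.mem_univ, true_and] at hb ⊢
      obtain ⟨a, ⟨s, rfl⟩, rfl⟩ := hb
      exact ⟨_, rfl⟩
    · intro b hb
      simp only [Finset.mem_image, Finset.mem_univ, true_and] at hb ⊢
      obtain ⟨s, rfl⟩ := hb
      exact ⟨f s, ⟨s, rfl⟩, phi_spec f g hfd s⟩
  have hinj : Set.InjOn φ ↑(Finset.univ.image f) := by
    apply Finset.injOn_of_card_image_eq
    rw [himg, hcard]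
  have hgf : FD g f := by
    intro s s' hgs
    have h1 : φ (f s) = φ (f s') := by
      rw [hφ]; simp only
      rw [phi_spec f g hfd s, phi_spec f g hfd s', hgs]
    exact hinj (by simp) (by simp) h1
  refine ⟨hgf, ?_⟩
  unfold margMultiset
  rw [← himg, Finset.image_val_of_injOn hinj, Multiset.map_map]
  apply Multiset.map_congr rfl
  intro a ha
  rw [Finset.mem_val, Finset.mem_image] at ha
  obtain ⟨s0, -, rfl⟩ := ha
  simp only [Function.comp_apply, hφ]
  rw [phi_spec f g hfd s0]
  apply Finset.sum_congr _ (fun _ _ => rfl)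
  ext s
  simp only [Finset.mem_filter, Finset.mem_univ, true_and]
  exact ⟨fun h => hfd _ _ h, fun h => hgf _ _ h⟩

end Aux

open Fin.NatCast

theorem stmt_4 {X A : Type*} [Fintype X] [Nonempty X] [DecidableEq A]
    (k : ℕ) (hk : Odd k) (hkpos : 0 < k)
    (P : X → ℝ) (hP : ∀ s, 0 < P s) (hsum : ∑ s, P s = 1)
    (x : Fin (k + 1) → X → A)
    (hfd : ∀ i : Fin (k + 1), Even (i : ℕ) → FD (x i) (x (i + 1)))
    (hmde : ∀ j : Fin (k + 1), Odd (j : ℕ) →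
      margMultiset P (x j) = margMultiset P (x (j + 1))) :
    ∀ i : Fin (k + 1), Even (i : ℕ) →
      FD (x (i + 1)) (x i) ∧ margMultiset P (x i) = margMultiset P (x (i + 1)) := by
  set N : ℕ → ℕ := fun m => (Finset.univ.image (x (m : Fin (k + 1)))).card with hN
  have hstep : ∀ m : ℕ, N (m + 1) ≤ N m := by
    intro m
    have hcast : ((m + 1 : ℕ) : Fin (k + 1)) = (m : Fin (k + 1)) + 1 := by push_cast; ring
    rcases Nat.even_or_odd ((m : Fin (k + 1)) : ℕ) with he | ho
    · have := FD_card_le (x (m : Fin (k + 1))) (x ((m : Fin (k + 1)) + 1))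
        (hfd _ he)
      simpa [hN, hcast] using this
    · have := hmde _ ho
      have hc := congrArg Multiset.card this
      rw [margMultiset_card, margMultiset_card] at hc
      simp only [hN, hcast]
      omega
  have hanti : Antitone N := antitone_nat_of_succ_le hstep
  have hwrap : N (k + 1) = N 0 := by
    simp [hN]
  have hconst : ∀ m ≤ k + 1, N m = N 0 := by
    intro m hm
    have h1 := hanti (Nat.zero_le m)
    have h2 := hanti hm
    omega
  intro i hi
  have hik : (i : ℕ) + 1 ≤ k + 1 := by omega
  have hcast1 : ((i : ℕ) : Fin (k + 1)) = i := Fin.cast_val_eq_self i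
  have hcast2 : (((i : ℕ) + 1 : ℕ) : Fin (k + 1)) = i + 1 := by push_cast [hcast1]; ring
  have hcard : (Finset.univ.image (x i)).card = (Finset.univ.image (x (i + 1))).card := by
    have e1 := hconst (i : ℕ) (by omega)
    have e2 := hconst ((i : ℕ) + 1) hik
    simp only [hN, hcast1, hcast2] at e1 e2
    omega
  exact key P (x i) (x (i + 1)) (hfd i hi) hcard
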